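/- Let σ be a permutation of Fin (2d) (with d ≥ 2) that maps the block {0,...,d-1} onto {d,...,2d-1} and vice versa, and let ω^d(σ) denote the permutation of Fin (3d) obtained by shifting σ up by d (acting on {d,...,3d-1}, fixing {0,...,d-1}). Then the pair σ, ω^d(σ) satisfies the braid relation σ·ω^d(σ)·σ = ω^d(σ)·σ·ω^d(σ) (regarding σ as fixing {2d,...,3d-1}) if and only if σ² commutes with the shift: σ²(d+i) = d + σ²(i) for all i in {0,...,d-1}. -/

import Mathlib

/-- The shift of a permutation of `ℕ` up by `d`: fixes `{0,…,d-1}` and acts as `σ`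
conjugated by `k ↦ k + d` above. -/
def shift (d : ℕ) (σ : Equiv.Perm ℕ) : Equiv.Perm ℕ where
  toFun k := if k < d then k else σ (k - d) + d
  invFun k := if k < d then k else σ⁻¹ (k - d) + d
  left_inv k := by
    by_cases h : k < d
    · simp [h]
    · dsimp only
      rw [if_neg h, if_neg (by omega), Nat.add_sub_cancel, Equiv.Perm.inv_def, Equiv.symm_apply_apply]
      omega
  right_inv k := by
    by_cases h : k < d
    · simp [h]
    · dsimp only
      rw [if_neg h, if_neg (by omega), Nat.add_sub_cancel, Equiv.Perm.inv_def, Equiv.apply_symm_apply]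
      omega

/-- The involution of `ℕ` swapping the blocks `{0,…,d-1}` and `{d,…,2d-1}`. -/
def theta (d : ℕ) : Equiv.Perm ℕ :=
  Function.Involutive.toPerm
    (fun k => if k < d then k + d else if k < 2 * d then k - d else k)
    (by intro k; dsimp only; split_ifs <;> omega)

lemma shift_apply (d : ℕ) (σ : Equiv.Perm ℕ) (k : ℕ) :
    shift d σ k = if k < d then k else σ (k - d) + d := rfl

/-- Let `σ` be a permutation of `{0,…,2d-1}` (d ≥ 2) mapping the block `{0,…,d-1}`
onto `{d,…,2d-1}` (and hence vice versa). Then `σ` and its shift `ω^d(σ)` satisfy the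
braid relation iff `σ²(d+i) = d + σ²(i)` for all `i < d`. -/
theorem stmt_2 (d : ℕ) (hd : 2 ≤ d) (σ : Equiv.Perm ℕ)
    (hfix : ∀ k, 2 * d ≤ k → σ k = k)
    (hblock : ∀ i < d, d ≤ σ i ∧ σ i < 2 * d) :
    σ * shift d σ * σ = shift d σ * σ * shift d σ ↔
      ∀ i < d, (σ * σ) (d + i) = d + (σ * σ) i := by
  -- σ maps [d,2d) into [0,d)
  have hσlt : ∀ k, d ≤ k → k < 2 * d → σ k < d := by
    have hinj : Function.Injective (fun i : Fin d => (⟨σ i - d, by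
        obtain ⟨h1, h2⟩ := hblock i i.2; omega⟩ : Fin d)) := by
      intro i j hij
      obtain ⟨h1, h2⟩ := hblock i i.2
      obtain ⟨h3, h4⟩ := hblock j j.2
      have hv : σ (i : ℕ) - d = σ (j : ℕ) - d := congrArg Fin.val hij
      have hv' : σ (i : ℕ) = σ (j : ℕ) := by omega
      exact Fin.ext (σ.injective hv')
    have hsurj := Finite.injective_iff_surjective.mp hinj
    intro k hk1 hk2
    by_contra hcon
    push_neg at hcon
    rcases lt_or_ge (σ k) (2 * d) with h2 | h2
    · obtain ⟨i, hi⟩ := hsurj ⟨σ k - d, by omega⟩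
      have hv : σ (i : ℕ) - d = σ k - d := congrArg Fin.val hi
      obtain ⟨h3, h4⟩ := hblock i i.2
      have hv' : σ (i : ℕ) = σ k := by omega
      have := σ.injective hv'
      have := i.2
      omega
    · have h3 := hfix (σ k) h2
      have := σ.injective h3
      omega
  constructor
  · intro h i hi
    obtain ⟨hb1, hb2⟩ := hblock i hi
    have hlt : σ (d + i) < d := hσlt (d + i) (by omega) (by omega)
    have e1 : shift d σ (σ (d + i)) = σ (d + i) := by
      rw [shift_apply, if_pos hlt]
    have e2 : shift d σ (d + i) = σ i + d := by
      rw [shift_apply, if_neg (by omega), Nat.add_sub_cancel_left]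
    have e3 : σ (σ i + d) = σ i + d := hfix _ (by omega)
    have e4 : shift d σ (σ i + d) = σ (σ i) + d := by
      rw [shift_apply, if_neg (by omega), Nat.add_sub_cancel]
    have hpt := congrArg (fun π : Equiv.Perm ℕ => π (d + i)) h
    simp only [Equiv.Perm.mul_apply] at hpt
    rw [e1, e2, e3, e4] at hpt
    simp only [Equiv.Perm.mul_apply]
    omega
  · intro h
    ext k
    simp only [Equiv.Perm.mul_apply]
    rcases lt_or_ge k d with hk | hk
    · -- k < d
      obtain ⟨h1, h2⟩ := hblock k hk
      obtain ⟨h3, h4⟩ := hblock (σ k - d) (by omega)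
      have e1 : shift d σ k = k := by rw [shift_apply, if_pos hk]
      have e2 : shift d σ (σ k) = σ (σ k - d) + d := by
        rw [shift_apply, if_neg (by omega)]
      have e3 : σ (σ (σ k - d) + d) = σ (σ k - d) + d := hfix _ (by omega)
      rw [e1, e2, e3]
    rcases lt_or_ge k (2 * d) with hk2 | hk2
    · -- d ≤ k < 2d
      have hlt : σ k < d := hσlt k hk hk2
      obtain ⟨h3, h4⟩ := hblock (k - d) (by omega)
      have e1 : shift d σ (σ k) = σ k := by rw [shift_apply, if_pos hlt]
      have e2 : shift d σ k = σ (k - d) + d := by rw [shift_apply, if_neg (by omega)]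
      have e3 : σ (σ (k - d) + d) = σ (k - d) + d := hfix _ (by omega)
      have e4 : shift d σ (σ (k - d) + d) = σ (σ (k - d)) + d := by
        rw [shift_apply, if_neg (by omega), Nat.add_sub_cancel]
      rw [e1, e2, e3, e4]
      have hh := h (k - d) (by omega)
      simp only [Equiv.Perm.mul_apply] at hh
      have hk' : d + (k - d) = k := by omega
      rw [hk'] at hh
      omega
    rcases lt_or_ge k (3 * d) with hk3 | hk3
    · -- 2d ≤ k < 3d
      have e0 : σ k = k := hfix k hk2
      obtain ⟨h3, h4⟩ := hblock (k - d - d) (by omega)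
      have hlt : σ (k - d) < d := hσlt (k - d) (by omega) (by omega)
      have e1 : shift d σ k = σ (k - d) + d := by rw [shift_apply, if_neg (by omega)]
      have hlt2 : σ (σ (k - d) + d) < d := hσlt _ (by omega) (by omega)
      have e2 : shift d σ (σ (σ (k - d) + d)) = σ (σ (k - d) + d) := by
        rw [shift_apply, if_pos hlt2]
      rw [e0, e1, e2]
    · -- 3d ≤ k
      have e0 : σ k = k := hfix k (by omega)
      have e1 : shift d σ k = k := by
        rw [shift_apply, if_neg (by omega), hfix (k - d) (by omega)]
        omega
      simp only [e0, e1]
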